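/- Let U be a complete augmented differential graded algebra, p ∈ U a degree-0 idempotent cycle, and h ∈ U an element of degree 1 with dh = 1 - p. Define τ₁ = τ^{B̄U}: B̄U → U, the universal bar construction twisting cochain (the desuspension on sIU and zero on higher tensor powers), and for j ≥ 2 define τ_j: (sIU)^{⊗j} → U by τ_j[α₁|...|α_j] = α₁·h·α₂·h·...·α_{j-1}·h·α_j (j-1 copies of h). Then τ^h = τ₁ + τ₂ + ... : B̄U → U satisfies the twisting cochain equation with respect to the deconcatenation coalgebra structure on B̄U and the new composition α∘β = αpβ on U: D(τ^h) + τ^h ∘ ∂ = τ^h ⊙ τ^h, where ∂ is the bar construction coalgebra perturbation (the coderivation induced by the multiplication of U) and ⊙ is the cup pairing formed with ∘. -/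

import Mathlib

open scoped TensorProduct DirectSum

noncomputable section
namespace HPT

/-- The sign `(-1)^k` for an integer `k`. -/
def sgn (k : ℤ) : ℤ := (-1) ^ k.natAbs

variable {R : Type} [CommRing R]

section Graded

variable {M : Type} [AddCommGroup M] [Module R M]
variable {N : Type} [AddCommGroup N] [Module R N]

/-- `f : M → N` is homogeneous of degree `r` with respect to the gradings `ℳ`, `𝒩`. -/
def IsDeg (ℳ : ℤ → Submodule R M) (𝒩 : ℤ → Submodule R N) (r : ℤ) (f : M →ₗ[R] N) : Prop :=
  ∀ i : ℤ, ∀ x ∈ ℳ i, f x ∈ 𝒩 (i + r)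

/-- The image of `p ⊗ q` inside `M ⊗ N`. -/
def tmul' (p : Submodule R M) (q : Submodule R N) : Submodule R (M ⊗[R] N) :=
  LinearMap.range (TensorProduct.map p.subtype q.subtype)

/-- The sign operator multiplying a homogeneous element of degree `i` by `(-1)^(k*i)`;
used to implement the Eilenberg-Koszul sign convention. -/
def sgnOp (ℳ : ℤ → Submodule R M) [DirectSum.Decomposition ℳ] (k : ℤ) : M →ₗ[R] M :=
  (DirectSum.decomposeLinearEquiv ℳ).symm.toLinearMap ∘ₗ
    (DirectSum.toModule R ℤ (⨁ i, ↥(ℳ i)) fun i =>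
      sgn (k * i) • DirectSum.lof R ℤ (fun j => ↥(ℳ j)) i) ∘ₗ
    (DirectSum.decomposeLinearEquiv ℳ).toLinearMap

/-- The Hom-complex differential `D(f) = d_N ∘ f - (-1)^{|f|} f ∘ d_M` for `f` of degree `r`. -/
def DhGen (dM : M →ₗ[R] M) (dN : N →ₗ[R] N) (r : ℤ) (f : M →ₗ[R] N) : M →ₗ[R] N :=
  dN ∘ₗ f - sgn r • (f ∘ₗ dM)

/-- The cup pairing `f ∪ g = μ ∘ (f ⊗ g) ∘ Δ_M`, with the Koszul sign `(-1)^{|g| |m'|}`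
implemented by the sign operator `σ` (to be taken to be `sgnOp ℳ |g|`). -/
def cupGen {C B : Type} [AddCommGroup C] [Module R C] [AddCommGroup B] [Module R B]
    (ΔM : M →ₗ[R] M ⊗[R] C) (μ : N ⊗[R] B →ₗ[R] N) (σ : M →ₗ[R] M)
    (f : M →ₗ[R] N) (g : C →ₗ[R] B) : M →ₗ[R] N :=
  μ ∘ₗ TensorProduct.map f g ∘ₗ LinearMap.rTensor C σ ∘ₗ ΔM

/-- The cap operator `φ ∩ ·` on `M ⊗ N`, where `M` carries a comodule structure map
`ΔM : M → M ⊗ C` and `N` a module structure map `μ : A ⊗ N → N`; `k` is the degree of `φ`. -/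
def cap {C A' : Type} [AddCommGroup C] [Module R C] [AddCommGroup A'] [Module R A']
    (𝓜 : ℤ → Submodule R M) [DirectSum.Decomposition 𝓜]
    (ΔM : M →ₗ[R] M ⊗[R] C) (μ : A' ⊗[R] N →ₗ[R] N) (k : ℤ) (φ : C →ₗ[R] A') :
    M ⊗[R] N →ₗ[R] M ⊗[R] N :=
  LinearMap.lTensor M (μ ∘ₗ LinearMap.rTensor N φ) ∘ₗ
    (TensorProduct.assoc R M C N).toLinearMap ∘ₗ
    LinearMap.rTensor N (LinearMap.rTensor C (sgnOp 𝓜 k) ∘ₗ ΔM)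

/-- The tensor-product differential `d ⊗ 1 + (-1)^{|m|} 1 ⊗ d` on `M ⊗ N`. -/
def dTens (𝓜 : ℤ → Submodule R M) [DirectSum.Decomposition 𝓜]
    (dM : M →ₗ[R] M) (dN : N →ₗ[R] N) : M ⊗[R] N →ₗ[R] M ⊗[R] N :=
  LinearMap.rTensor N dM + LinearMap.lTensor M dN ∘ₗ LinearMap.rTensor N (sgnOp 𝓜 1)

end Graded

section Coalg

variable {C : Type} [AddCommGroup C] [Module R C]

/-- Differential graded coalgebra structure data (internally ℤ-graded). -/
structure IsDGCoalg (𝒞 : ℤ → Submodule R C) [DirectSum.Decomposition 𝒞]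
    (Δ : C →ₗ[R] C ⊗[R] C) (εC : C →ₗ[R] R) (dC : C →ₗ[R] C) : Prop where
  coassoc : (TensorProduct.assoc R C C C).toLinearMap ∘ₗ LinearMap.rTensor C Δ ∘ₗ Δ
      = LinearMap.lTensor C Δ ∘ₗ Δ
  counit_left : (TensorProduct.lid R C).toLinearMap ∘ₗ LinearMap.rTensor C εC ∘ₗ Δ
      = LinearMap.id
  counit_right : (TensorProduct.rid R C).toLinearMap ∘ₗ LinearMap.lTensor C εC ∘ₗ Δ
      = LinearMap.id
  comul_deg : ∀ n : ℤ, ∀ x ∈ 𝒞 n, Δ x ∈ ⨆ p : ℤ, tmul' (𝒞 p) (𝒞 (n - p))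
  d_deg : IsDeg 𝒞 𝒞 (-1) dC
  d_sq : dC ∘ₗ dC = 0
  comul_chain : Δ ∘ₗ dC =
      (LinearMap.rTensor C dC + LinearMap.lTensor C dC ∘ₗ LinearMap.rTensor C (sgnOp 𝒞 1)) ∘ₗ Δ
  counit_deg : ∀ i : ℤ, i ≠ 0 → ∀ x ∈ 𝒞 i, εC x = 0
  counit_chain : εC ∘ₗ dC = 0

/-- Coaugmentation data for a dg coalgebra: a grouplike cycle `e` of degree 0. -/
structure IsCoaug (Δ : C →ₗ[R] C ⊗[R] C) (εC : C →ₗ[R] R) (dC : C →ₗ[R] C)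
    (𝒞 : ℤ → Submodule R C) (e : C) : Prop where
  mem : e ∈ 𝒞 0
  counit : εC e = 1
  diag : Δ e = e ⊗ₜ[R] e
  d : dC e = 0

end Coalg

section Alg

variable {A : Type} [Ring A] [Algebra R A]

/-- Differential graded algebra structure (internally graded, multiplication of `A`). -/
structure IsDGAlg (𝒜 : ℤ → Submodule R A) (dA : A →ₗ[R] A) : Prop where
  d_deg : IsDeg 𝒜 𝒜 (-1) dA
  d_sq : dA ∘ₗ dA = 0
  leibniz : ∀ i : ℤ, ∀ x ∈ 𝒜 i, ∀ y : A, dA (x * y) = dA x * y + sgn i • (x * dA y)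
  d_one : dA 1 = 0

/-- Augmentation for a dg algebra. -/
structure IsAug (𝒜 : ℤ → Submodule R A) (dA : A →ₗ[R] A) (εA : A →ₐ[R] R) : Prop where
  vanish : ∀ i : ℤ, i ≠ 0 → ∀ x ∈ 𝒜 i, εA x = 0
  chain : ∀ x : A, εA (dA x) = 0

end Alg

section Conv

variable {C : Type} [AddCommGroup C] [Module R C]
variable {A : Type} [Ring A] [Algebra R A]

/-- The cup (convolution) product on `Hom(C, A)`; `s` is the degree of `g`. -/
def cup (𝒞 : ℤ → Submodule R C) [DirectSum.Decomposition 𝒞] (Δ : C →ₗ[R] C ⊗[R] C)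
    (s : ℤ) (f g : C →ₗ[R] A) : C →ₗ[R] A :=
  cupGen Δ (LinearMap.mul' R A) (sgnOp 𝒞 s) f g

/-- The convolution unit `η ∘ ε : C → A`. -/
def convOne (A : Type) [Ring A] [Algebra R A] (εC : C →ₗ[R] R) : C →ₗ[R] A :=
  Algebra.linearMap R A ∘ₗ εC

variable (𝒞 : ℤ → Submodule R C) [DirectSum.Decomposition 𝒞]

/-- `τ : C → A` is a twisting cochain. -/
structure IsTwisting (Δ : C →ₗ[R] C ⊗[R] C) (εC : C →ₗ[R] R) (dC : C →ₗ[R] C) (e : C)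
    (𝒜 : ℤ → Submodule R A) (dA : A →ₗ[R] A) (εA : A →ₐ[R] R) (τ : C →ₗ[R] A) : Prop where
  deg : IsDeg 𝒞 𝒜 (-1) τ
  eq : DhGen dC dA (-1) τ = cup 𝒞 Δ (-1) τ τ
  unit : τ e = 0
  counit : εA.toLinearMap ∘ₗ τ = 0

/-- `ψ` is a homotopy of twisting cochains from `τ₁` to `τ₂`. -/
structure IsTCHomotopy (Δ : C →ₗ[R] C ⊗[R] C) (εC : C →ₗ[R] R) (dC : C →ₗ[R] C) (e : C)
    (𝒜 : ℤ → Submodule R A) (dA : A →ₗ[R] A) (εA : A →ₐ[R] R)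
    (τ₁ τ₂ ψ : C →ₗ[R] A) : Prop where
  deg : IsDeg 𝒞 𝒜 0 ψ
  eq : DhGen dC dA 0 ψ = cup 𝒞 Δ 0 τ₁ ψ - cup 𝒞 Δ (-1) ψ τ₂
  unit : ψ e = 1
  counit : εA.toLinearMap ∘ₗ ψ = εC

end Conv

section Mod

variable {A : Type} [Ring A] [Algebra R A]
variable {N : Type} [AddCommGroup N] [Module R N]

/-- Differential graded left module over a dg algebra. -/
structure IsDGModLeft (𝒜 : ℤ → Submodule R A) (dA : A →ₗ[R] A)
    (𝒩 : ℤ → Submodule R N) (dN : N →ₗ[R] N) (μ : A ⊗[R] N →ₗ[R] N) : Prop where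
  one_act : ∀ x : N, μ (1 ⊗ₜ x) = x
  mul_act : ∀ (a b : A) (x : N), μ ((a * b) ⊗ₜ x) = μ (a ⊗ₜ μ (b ⊗ₜ x))
  act_deg : ∀ i j : ℤ, ∀ a ∈ 𝒜 i, ∀ x ∈ 𝒩 j, μ (a ⊗ₜ x) ∈ 𝒩 (i + j)
  d_deg : IsDeg 𝒩 𝒩 (-1) dN
  d_sq : dN ∘ₗ dN = 0
  chain : ∀ i : ℤ, ∀ a ∈ 𝒜 i, ∀ x : N,
    dN (μ (a ⊗ₜ x)) = μ (dA a ⊗ₜ x) + sgn i • μ (a ⊗ₜ dN x)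

/-- Differential graded right module over a dg algebra. -/
structure IsDGModRight (𝒜 : ℤ → Submodule R A) (dA : A →ₗ[R] A)
    (𝒩 : ℤ → Submodule R N) (dN : N →ₗ[R] N) (μ : N ⊗[R] A →ₗ[R] N) : Prop where
  one_act : ∀ x : N, μ (x ⊗ₜ 1) = x
  mul_act : ∀ (x : N) (a b : A), μ (x ⊗ₜ (a * b)) = μ (μ (x ⊗ₜ a) ⊗ₜ b)
  act_deg : ∀ i j : ℤ, ∀ x ∈ 𝒩 i, ∀ a ∈ 𝒜 j, μ (x ⊗ₜ a) ∈ 𝒩 (i + j)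
  d_deg : IsDeg 𝒩 𝒩 (-1) dN
  d_sq : dN ∘ₗ dN = 0
  chain : ∀ i j : ℤ, ∀ x ∈ 𝒩 i, ∀ a ∈ 𝒜 j,
    dN (μ (x ⊗ₜ a)) = μ (dN x ⊗ₜ a) + sgn i • μ (x ⊗ₜ dA a)

variable {C : Type} [AddCommGroup C] [Module R C]
variable {M : Type} [AddCommGroup M] [Module R M]

/-- Differential graded comodule over a dg coalgebra, with structure map `M → M ⊗ C`. -/
structure IsDGComod (𝒞 : ℤ → Submodule R C) (Δ : C →ₗ[R] C ⊗[R] C)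
    (εC : C →ₗ[R] R) (dC : C →ₗ[R] C)
    (𝓜 : ℤ → Submodule R M) [DirectSum.Decomposition 𝓜] (dM : M →ₗ[R] M)
    (ΔM : M →ₗ[R] M ⊗[R] C) : Prop where
  coassoc : (TensorProduct.assoc R M C C).toLinearMap ∘ₗ LinearMap.rTensor C ΔM ∘ₗ ΔM
      = LinearMap.lTensor M Δ ∘ₗ ΔM
  counit : (TensorProduct.rid R M).toLinearMap ∘ₗ LinearMap.lTensor M εC ∘ₗ ΔM = LinearMap.id
  deg : ∀ n : ℤ, ∀ x ∈ 𝓜 n, ΔM x ∈ ⨆ p : ℤ, tmul' (𝓜 p) (𝒞 (n - p))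
  d_deg : IsDeg 𝓜 𝓜 (-1) dM
  d_sq : dM ∘ₗ dM = 0
  chain : ΔM ∘ₗ dM =
    (LinearMap.rTensor C dM + LinearMap.lTensor M dC ∘ₗ LinearMap.rTensor C (sgnOp 𝓜 1)) ∘ₗ ΔM

end Mod

section Cocomplete

variable {C : Type} [AddCommGroup C] [Module R C]

/-- Iterated tensor powers of `C`. -/
def iTensM (R C : Type) [CommRing R] [AddCommGroup C] [Module R C] : ℕ → ModuleCat R
  | 0 => ModuleCat.of R C
  | n + 1 => ModuleCat.of R ((iTensM R C n) ⊗[R] C)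

/-- The reduced projection `id - η ∘ ε` associated to a coaugmentation. -/
def redProj (εC : C →ₗ[R] R) (e : C) : C →ₗ[R] C :=
  LinearMap.id - LinearMap.toSpanSingleton R C e ∘ₗ εC

/-- The reduced iterated comultiplication `C → (JC)^{⊗(n+1)}`. -/
def redIter (Δ : C →ₗ[R] C ⊗[R] C) (π' : C →ₗ[R] C) : (n : ℕ) → (C →ₗ[R] iTensM R C n)
  | 0 => π'
  | n + 1 => TensorProduct.map (redIter Δ π' n) π' ∘ₗ Δ

/-- The coaugmentation filtration `F_n C = ker (C → (JC)^{⊗(n+1)})`. -/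
def coaugFil (Δ : C →ₗ[R] C ⊗[R] C) (εC : C →ₗ[R] R) (e : C) (n : ℕ) : Submodule R C :=
  LinearMap.ker (redIter Δ (redProj εC e) n)

/-- The coaugmented coalgebra `C` is cocomplete: it is the union of the coaugmentation
filtration. -/
def Cocomplete (Δ : C →ₗ[R] C ⊗[R] C) (εC : C →ₗ[R] R) (e : C) : Prop :=
  ∀ x : C, ∃ n : ℕ, x ∈ coaugFil Δ εC e n

end Cocomplete

end HPT

namespace HPT

/-- `wval h [a₁, …, a_j] = a₁ · h · a₂ · h · ⋯ · h · a_j` (with `j-1` copies of `h`);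
the value of the twisting cochain `τ^h` on a bar-construction word. -/
def wval {U : Type} [Ring U] (h : U) : List U → U
  | [] => 0
  | [a] => a
  | a :: b :: rest => a * h * wval h (b :: rest)

/-- Extend a `Fin j`-indexed family by zero. -/
def extFn {j : ℕ} {β : Type} [Zero β] (f : Fin j → β) : ℕ → β :=
  fun k => if hk : k < j then f ⟨k, hk⟩ else 0

/-- The segment `[α_s, …, α_{s+t-1}]` of the word `α`. -/
def seg {j : ℕ} {U : Type} [Ring U] (α : Fin j → U) (s t : ℕ) : List U :=
  (List.range' s t).map (extFn α)

/-- The product of the bar signs `(-1)^{|α_i|+1}` over the first `m` entries. -/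
def bs {j : ℕ} (degs : Fin j → ℤ) (m : ℕ) : ℤ :=
  ∏ i ∈ Finset.range m, sgn (extFn degs i + 1)

end HPT


namespace HPT

lemma sgn_eq (k : ℤ) : sgn k = (Int.negOnePow k : ℤˣ) := by
  unfold sgn
  rcases Int.even_or_odd k with h | h
  · rw [(Int.natAbs_even.2 h).neg_one_pow, Int.negOnePow_even k h]; rfl
  · rw [(Int.natAbs_odd.2 h).neg_one_pow, Int.negOnePow_odd k h]; rfl

lemma sgn_add (a b : ℤ) : sgn (a + b) = sgn a * sgn b := by
  rw [sgn_eq, sgn_eq, sgn_eq, Int.negOnePow_add]; push_cast; ring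

lemma sgn_one' : sgn 1 = -1 := rfl

lemma sgn_sum (s : Finset ℕ) (f : ℕ → ℤ) : sgn (∑ i ∈ s, f i) = ∏ i ∈ s, sgn (f i) := by
  classical
  induction s using Finset.induction with
  | empty => simp [sgn]
  | insert _ _ h ih => rw [Finset.sum_insert h, Finset.prod_insert h, sgn_add, ih]

lemma wval_cons {U : Type} [Ring U] (h a : U) (L : List U) (hL : L ≠ []) :
    wval h (a :: L) = a * h * wval h L := by
  cases L with
  | nil => exact absurd rfl hL
  | cons b r => rfl

lemma wval_absorb {U : Type} [Ring U] (h a b : U) (L : List U) :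
    wval h ((a * b) :: L) = a * wval h (b :: L) := by
  cases L with
  | nil => rfl
  | cons c r => show (a*b) * h * _ = a * (b * h * _); rw [mul_assoc, mul_assoc, mul_assoc]

lemma map_range'_shift {U : Type} (f : ℕ → U) (s n : ℕ) :
    (List.range' (s+1) n).map f = (List.range' s n).map (fun k => f (k+1)) := by
  induction n generalizing s with
  | zero => rfl
  | succ m ih =>
      rw [List.range'_succ, List.range'_succ, List.map_cons, List.map_cons, ih]

lemma range'_map_ne {U : Type} (f : ℕ → U) (s n : ℕ) :
    (List.range' s (n+1)).map f ≠ [] := by simp [List.range'_succ]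

set_option maxHeartbeats 2000000 in
lemma tauh_main {R U : Type} [CommRing R] [Ring U] [Algebra R U]
    (𝒰 : ℤ → Submodule R U) (dU : U →ₗ[R] U) (hU : IsDGAlg 𝒰 dU)
    (p hel : U) (hhel : hel ∈ 𝒰 1) (hdh : dU hel = 1 - p) :
    ∀ (j : ℕ) (f : ℕ → U) (df : ℕ → ℤ), (∀ k, k < j → f k ∈ 𝒰 (df k)) →
    dU (wval hel ((List.range' 0 j).map f))
      = (∑ k ∈ Finset.range j, (∏ i ∈ Finset.range k, sgn (df i + 1)) •
          wval hel ((List.range' 0 k).map f ++ [dU (f k)]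
            ++ (List.range' (k+1) (j-(k+1))).map f))
        - (∑ k ∈ Finset.range (j-1), (∏ i ∈ Finset.range (k+1), sgn (df i + 1)) •
          wval hel ((List.range' 0 k).map f ++ [f k * f (k+1)]
            ++ (List.range' (k+2) (j-(k+2))).map f))
        + ∑ k ∈ Finset.range (j-1), (∏ i ∈ Finset.range (k+1), sgn (df i + 1)) •
          (wval hel ((List.range' 0 (k+1)).map f) * p
            * wval hel ((List.range' (k+1) (j-(k+1))).map f)) := by
  intro j
  induction j with
  | zero => intro f df hmem; simp [wval, List.range']
  | succ n ih =>
    cases n with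
    | zero =>
        intro f df hmem
        simp [wval, List.range', List.range'_succ]
    | succ m =>
        intro f df hmem
        have hsg : sgn (df 0 + 1) = -sgn (df 0) := by rw [sgn_add, sgn_one']; ring
        have hshift : ∀ (s t : ℕ), (List.range' (s+1) t).map f
            = (List.range' s t).map (fun k => f (k+1)) := fun s t => map_range'_shift f s t
        have hhead : ∀ t, (List.range' 0 (t+1)).map f
            = f 0 :: (List.range' 0 t).map (fun k => f (k+1)) := by
          intro t; rw [List.range'_succ, List.map_cons, hshift]
        have hIH := ih (fun k => f (k+1)) (fun k => df (k+1))
          (fun k hk => hmem (k+1) (by omega))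
        beta_reduce at hIH
        simp only [Nat.add_sub_cancel] at hIH ⊢
        set Wg : U := wval hel ((List.range' 0 (m+1)).map (fun k => f (k+1))) with hWgdef
        set S1g : U := ∑ k ∈ Finset.range (m+1),
            (∏ i ∈ Finset.range k, sgn (df (i+1) + 1)) •
            wval hel ((List.range' 0 k).map (fun k => f (k+1)) ++ [dU (f (k+1))]
              ++ (List.range' (k+1) (m+1-(k+1))).map (fun k => f (k+1))) with hS1g
        set S2g : U := ∑ k ∈ Finset.range m,
            (∏ i ∈ Finset.range (k+1), sgn (df (i+1) + 1)) •
            wval hel ((List.range' 0 k).map (fun k => f (k+1)) ++ [f (k+1) * f (k+2)]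
              ++ (List.range' (k+2) (m+1-(k+2))).map (fun k => f (k+1))) with hS2g
        set S3g : U := ∑ k ∈ Finset.range m,
            (∏ i ∈ Finset.range (k+1), sgn (df (i+1) + 1)) •
            (wval hel ((List.range' 0 (k+1)).map (fun k => f (k+1))) * p
              * wval hel ((List.range' (k+1) (m+1-(k+1))).map (fun k => f (k+1)))) with hS3g
        have hIH' : dU Wg = S1g - S2g + S3g := hIH
        have hL : dU (wval hel ((List.range' 0 (m+1+1)).map f))
            = dU (f 0) * (hel * Wg)
              + sgn (df 0) • (f 0 * ((1 - p) * Wg + sgn 1 • (hel * dU Wg))) := by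
          rw [hhead, wval_cons _ _ _ (range'_map_ne _ 0 m), mul_assoc,
            hU.leibniz (df 0) (f 0) (hmem 0 (by omega)) (hel * Wg),
            hU.leibniz 1 hel hhel Wg, hdh]
        have EA : (∑ k ∈ Finset.range (m+1+1), (∏ i ∈ Finset.range k, sgn (df i + 1)) •
              wval hel ((List.range' 0 k).map f ++ [dU (f k)]
                ++ (List.range' (k+1) (m+1+1-(k+1))).map f))
            = sgn (df 0 + 1) • (f 0 * (hel * S1g)) + dU (f 0) * (hel * Wg) := by
          rw [Finset.sum_range_succ']
          congr 1
          · rw [hS1g, Finset.mul_sum, Finset.mul_sum, Finset.smul_sum]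
            refine Finset.sum_congr rfl fun k hk => ?_
            have e2 : m+1+1-(k+1+1) = m+1-(k+1) := by omega
            have e1 : (List.range' 0 (k+1)).map f ++ [dU (f (k+1))]
                ++ (List.range' (k+1+1) (m+1+1-(k+1+1))).map f
                = f 0 :: ((List.range' 0 k).map (fun k => f (k+1)) ++ [dU (f (k+1))]
                  ++ (List.range' (k+1) (m+1-(k+1))).map (fun k => f (k+1))) := by
              rw [hhead, e2, hshift]; rfl
            rw [e1, wval_cons _ _ _ (by simp), Finset.prod_range_succ']
            simp only [mul_smul_comm, smul_smul, mul_assoc]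
            congr 1
            ring
          · have e0 : (List.range' 0 0).map f ++ [dU (f 0)]
                ++ (List.range' (0+1) (m+1+1-(0+1))).map f
                = dU (f 0) :: (List.range' 0 (m+1)).map (fun k => f (k+1)) := by
              have e : m+1+1-(0+1) = m+1 := by omega
              rw [e, hshift]; rfl
            rw [e0, wval_cons _ _ _ (range'_map_ne _ 0 m), Finset.prod_range_zero, one_smul,
              mul_assoc]
        have EB : (∑ k ∈ Finset.range (m+1), (∏ i ∈ Finset.range (k+1), sgn (df i + 1)) •
              wval hel ((List.range' 0 k).map f ++ [f k * f (k+1)]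
                ++ (List.range' (k+2) (m+1+1-(k+2))).map f))
            = sgn (df 0 + 1) • (f 0 * (hel * S2g)) + sgn (df 0 + 1) • (f 0 * Wg) := by
          rw [Finset.sum_range_succ']
          congr 1
          · rw [hS2g, Finset.mul_sum, Finset.mul_sum, Finset.smul_sum]
            refine Finset.sum_congr rfl fun k hk => ?_
            have e2 : m+1+1-(k+1+2) = m+1-(k+2) := by omega
            have e3 : k+1+2 = (k+2)+1 := by omega
            have e1 : (List.range' 0 (k+1)).map f ++ [f (k+1) * f (k+1+1)]
                ++ (List.range' (k+1+2) (m+1+1-(k+1+2))).map f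
                = f 0 :: ((List.range' 0 k).map (fun k => f (k+1)) ++ [f (k+1) * f (k+2)]
                  ++ (List.range' (k+2) (m+1-(k+2))).map (fun k => f (k+1))) := by
              rw [hhead, e2, e3, hshift]; rfl
            rw [e1, wval_cons _ _ _ (by simp), Finset.prod_range_succ']
            simp only [mul_smul_comm, smul_smul, mul_assoc]
            congr 1
            ring
          · have e2 : m+1+1-(0+2) = m := by omega
            have e1 : (List.range' 0 0).map f ++ [f 0 * f (0+1)]
                ++ (List.range' (0+2) (m+1+1-(0+2))).map f
                = (f 0 * f 1) :: (List.range' 2 m).map f := by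
              rw [e2]; rfl
            have e0 : f 1 :: (List.range' 2 m).map f
                = (List.range' 0 (m+1)).map (fun k => f (k+1)) := by
              rw [← hshift, List.range'_succ, List.map_cons]
            rw [e1, wval_absorb, e0, Finset.prod_range_one]
        have EC : (∑ k ∈ Finset.range (m+1), (∏ i ∈ Finset.range (k+1), sgn (df i + 1)) •
              (wval hel ((List.range' 0 (k+1)).map f) * p
                * wval hel ((List.range' (k+1) (m+1+1-(k+1))).map f)))
            = sgn (df 0 + 1) • (f 0 * (hel * S3g)) + sgn (df 0 + 1) • (f 0 * (p * Wg)) := by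
          rw [Finset.sum_range_succ']
          congr 1
          · rw [hS3g, Finset.mul_sum, Finset.mul_sum, Finset.smul_sum]
            refine Finset.sum_congr rfl fun k hk => ?_
            have e2 : m+1+1-(k+1+1) = m+1-(k+1) := by omega
            have e4 : (List.range' 0 (k+1+1)).map f
                = f 0 :: (List.range' 0 (k+1)).map (fun k => f (k+1)) := hhead (k+1)
            have e5 : (List.range' (k+1+1) (m+1+1-(k+1+1))).map f
                = (List.range' (k+1) (m+1-(k+1))).map (fun k => f (k+1)) := by
              rw [e2, hshift]
            rw [e4, e5, wval_cons _ _ _ (range'_map_ne _ 0 k), Finset.prod_range_succ']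
            simp only [mul_smul_comm, smul_smul, mul_assoc]
            congr 1
            ring
          · have e4 : (List.range' 0 (0+1)).map f = [f 0] := rfl
            have e5 : (List.range' (0+1) (m+1+1-(0+1))).map f
                = (List.range' 0 (m+1)).map (fun k => f (k+1)) := by
              have e : m+1+1-(0+1) = m+1 := by omega
              rw [e, hshift]
            rw [e4, e5, Finset.prod_range_one]
            show sgn (df 0 + 1) • (wval hel [f 0] * p * Wg) = _
            rw [show wval hel [f 0] = f 0 from rfl, mul_assoc]
        rw [hL, hIH', EA, EB, EC, hsg, sgn_one']
        simp only [neg_smul, one_smul, smul_add, smul_sub, smul_neg, mul_add, mul_sub,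
          sub_mul, one_mul, mul_assoc, neg_neg, mul_neg]
        abel

end HPT

open HPT in
/-- Lemma 8.7: for a degree-0 idempotent cycle `p` and `h ∈ U₁` with
`dh = 1 - p`, the cochain `τ^h` with `τ^h[α₁|…|α_j] = α₁·h·α₂·⋯·h·α_j` satisfies
`D(τ^h) + τ^h∂ = τ^h ⊙ τ^h` with respect to the deconcatenation coalgebra structure
of `B̄U` and the composition `α∘β = αpβ`; stated here, equivalently, evaluated on an
arbitrary generating word `[α₁|…|α_j]` of the reduced bar construction. -/
theorem statement13
    {R : Type} [CommRing R]
    {U : Type} [Ring U] [Algebra R U]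
    (𝒰 : ℤ → Submodule R U) [GradedAlgebra 𝒰] (dU : U →ₗ[R] U) (εU : U →ₐ[R] R)
    (hU : IsDGAlg 𝒰 dU) (hAug : IsAug 𝒰 dU εU)
    (p : U) (hp : p ∈ 𝒰 0) (hpp : p * p = p) (hdp : dU p = 0)
    (hel : U) (hhel : hel ∈ 𝒰 1) (hdh : dU hel = 1 - p)
    (j : ℕ) (degs : Fin j → ℤ) (α : Fin j → U)
    (hα : ∀ ν : Fin j, α ν ∈ 𝒰 (degs ν))
    (hαaug : ∀ ν : Fin j, εU (α ν) = 0) :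
    dU (wval hel (seg α 0 j))
        - ∑ k ∈ Finset.range j, bs degs k •
            wval hel (seg α 0 k ++ [dU (extFn α k)] ++ seg α (k + 1) (j - (k + 1)))
        + ∑ k ∈ Finset.range (j - 1), bs degs (k + 1) •
            wval hel (seg α 0 k ++ [extFn α k * extFn α (k + 1)]
              ++ seg α (k + 2) (j - (k + 2)))
      = ∑ k ∈ Finset.range (j - 1),
          sgn (∑ i ∈ Finset.range (k + 1), (extFn degs i + 1)) •
            (wval hel (seg α 0 (k + 1)) * p * wval hel (seg α (k + 1) (j - (k + 1)))) := by
  have hmem : ∀ k, k < j → extFn α k ∈ 𝒰 (extFn degs k) := by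
    intro k hk
    simp only [extFn, dif_pos hk]
    exact hα ⟨k, hk⟩
  have H := tauh_main 𝒰 dU hU p hel hhel hdh j (extFn α) (extFn degs) hmem
  simp only [seg, bs]
  rw [H]
  have hc : ∀ k ∈ Finset.range (j-1),
      sgn (∑ i ∈ Finset.range (k+1), (extFn degs i + 1)) •
        (wval hel ((List.range' 0 (k+1)).map (extFn α)) * p
          * wval hel ((List.range' (k+1) (j-(k+1))).map (extFn α)))
      = (∏ i ∈ Finset.range (k+1), sgn (extFn degs i + 1)) •
        (wval hel ((List.range' 0 (k+1)).map (extFn α)) * p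
          * wval hel ((List.range' (k+1) (j-(k+1))).map (extFn α))) := by
    intro k _
    rw [sgn_sum]
  rw [Finset.sum_congr rfl hc]
  abel
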